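/- For q ∈ ℝ such that all the integrals below exist, the Tsallis-type moment of X ~ TD(θ) satisfies E[f^{q−1}(X; θ)] = ((ρ+δ)σ/Z_θ)·E[f^{q−1}(σW+μ; θ)] + (δσ/Z_θ)·{ E[𝟙{W ≤ −α√Y}·f^{q−1}(σW+μ; θ)] − E[𝟙{W ≤ α√Y}·f^{q−1}(σW+μ; θ)] }, where E[f^{q−1}(X; θ)] = ∫_ℝ f^q(x; θ) dx and the right-hand side expectations are the corresponding integrals against g(w) and the Gamma(p,1) density. -/

import Mathlib

open MeasureTheory Real Set Filter

noncomputable def lincGamma (p u : ℝ) : ℝ := ∫ w in (0:ℝ)..u, w ^ (p - 1) * Real.exp (-w)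

noncomputable def Tfun (p α x : ℝ) : ℝ := lincGamma p (x ^ 2 / α ^ 2) / Real.Gamma p

noncomputable def gammaPDF (p y : ℝ) : ℝ := y ^ (p - 1) * Real.exp (-y) / Real.Gamma p

noncomputable def Znorm (p σ α ρ δ : ℝ) (g : ℝ → ℝ) : ℝ :=
  σ * ∫ w : ℝ, (ρ + δ * Tfun p α w) * g w

noncomputable def tdPDF (p μ σ α ρ δ : ℝ) (g : ℝ → ℝ) (x : ℝ) : ℝ :=
  (1 / Znorm p σ α ρ δ g) * (ρ + δ * Tfun p α ((x - μ) / σ)) * g ((x - μ) / σ)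

noncomputable def cdfOf (d : ℝ → ℝ) (x : ℝ) : ℝ := ∫ t in Iic x, d t

/- Auxiliary lemmas -/

lemma intInt_aux {p : ℝ} (hp : 0 < p) (a b : ℝ) :
    IntervalIntegrable (fun w : ℝ => w ^ (p - 1) * Real.exp (-w)) volume a b :=
  (intervalIntegral.intervalIntegrable_rpow' (by linarith)).mul_continuousOn
    (Continuous.continuousOn (by continuity))

lemma lincGamma_cont {p : ℝ} (hp : 0 < p) : Continuous (lincGamma p) :=
  intervalIntegral.continuous_primitive (fun a b => intInt_aux hp a b) 0

lemma lincGamma_nonneg {p : ℝ} (hp : 0 < p) {u : ℝ} (hu : 0 ≤ u) : 0 ≤ lincGamma p u :=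
  intervalIntegral.integral_nonneg hu fun w hw =>
    mul_nonneg (Real.rpow_nonneg hw.1 _) (Real.exp_nonneg _)

lemma gammaIntegrand_integrableOn {p : ℝ} (hp : 0 < p) :
    IntegrableOn (fun w : ℝ => w ^ (p - 1) * Real.exp (-w)) (Ioi 0) := by
  have h := Real.GammaIntegral_convergent hp
  simpa [mul_comm] using h

lemma Gamma_sub_lincGamma {p : ℝ} (hp : 0 < p) {u : ℝ} (hu : 0 ≤ u) :
    Real.Gamma p - lincGamma p u = ∫ w in Ioi u, w ^ (p - 1) * Real.exp (-w) := by
  have hG : Real.Gamma p = ∫ w in Ioi 0, w ^ (p - 1) * Real.exp (-w) := by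
    rw [Real.Gamma_eq_integral hp]
    congr 1; ext w; ring
  have hsplit : (∫ w in Ioi (0:ℝ), w ^ (p - 1) * Real.exp (-w))
      = (∫ w in Ioc 0 u, w ^ (p - 1) * Real.exp (-w))
        + ∫ w in Ioi u, w ^ (p - 1) * Real.exp (-w) := by
    rw [← setIntegral_union (Ioc_disjoint_Ioi le_rfl) measurableSet_Ioi
      ((gammaIntegrand_integrableOn hp).mono_set Ioc_subset_Ioi_self)
      ((gammaIntegrand_integrableOn hp).mono_set (Ioi_subset_Ioi hu)),
      Ioc_union_Ioi_eq_Ioi hu]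
  have hl : lincGamma p u = ∫ w in Ioc 0 u, w ^ (p - 1) * Real.exp (-w) := by
    rw [lincGamma, intervalIntegral.integral_of_le hu]
  rw [hG, hsplit, hl]; ring

lemma lincGamma_le {p : ℝ} (hp : 0 < p) {u : ℝ} (hu : 0 ≤ u) :
    lincGamma p u ≤ Real.Gamma p := by
  have h := Gamma_sub_lincGamma hp hu
  have h2 : 0 ≤ ∫ w in Ioi u, w ^ (p - 1) * Real.exp (-w) := by
    apply setIntegral_nonneg measurableSet_Ioi
    intro w hw
    exact mul_nonneg (Real.rpow_nonneg (le_trans hu (le_of_lt hw)) _) (Real.exp_nonneg _)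
  linarith

lemma gammaPDF_integrableOn {p : ℝ} (hp : 0 < p) :
    IntegrableOn (gammaPDF p) (Ioi 0) := by
  have := (gammaIntegrand_integrableOn hp).div_const (Real.Gamma p)
  exact this

lemma tail_eq {p : ℝ} (hp : 0 < p) {u : ℝ} (hu : 0 ≤ u) :
    (∫ y in Ioi u, gammaPDF p y) = 1 - lincGamma p u / Real.Gamma p := by
  have hΓ : (0:ℝ) < Real.Gamma p := Real.Gamma_pos_of_pos hp
  have : (∫ y in Ioi u, gammaPDF p y)
      = (∫ w in Ioi u, w ^ (p - 1) * Real.exp (-w)) / Real.Gamma p := by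
    rw [← integral_div]; rfl
  rw [this, ← Gamma_sub_lincGamma hp hu, sub_div, div_self hΓ.ne']

lemma gammaPDF_meas (p : ℝ) : Measurable (gammaPDF p) := by unfold gammaPDF; fun_prop

lemma gammaPDF_nonneg {p y : ℝ} (hp : 0 < p) (hy : 0 ≤ y) : 0 ≤ gammaPDF p y :=
  div_nonneg (mul_nonneg (Real.rpow_nonneg hy _) (Real.exp_nonneg _))
    (Real.Gamma_nonneg_of_nonneg hp.le)

lemma mem_Ioo_iff_sq {α y w : ℝ} (hα : 0 < α) (hy : 0 < y) :
    w ^ 2 / α ^ 2 < y ↔ w ∈ Ioo (-(α * Real.sqrt y)) (α * Real.sqrt y) := by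
  have ha : (0:ℝ) < α * Real.sqrt y := mul_pos hα (Real.sqrt_pos.mpr hy)
  have hsq : (α * Real.sqrt y) ^ 2 = α ^ 2 * y := by
    rw [mul_pow, Real.sq_sqrt hy.le]
  constructor
  · intro h
    have h2 : w ^ 2 < (α * Real.sqrt y) ^ 2 := by
      rw [hsq]; rw [div_lt_iff₀ (by positivity)] at h; linarith [h]
    obtain ⟨h3, h4⟩ := abs_lt_of_sq_lt_sq' h2 ha.le
    exact ⟨h3, h4⟩
  · rintro ⟨h3, h4⟩
    have h2 : w ^ 2 < (α * Real.sqrt y) ^ 2 := sq_lt_sq' h3 h4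
    rw [hsq] at h2
    rw [div_lt_iff₀ (by positivity)]; linarith

lemma fubini_key {p α : ℝ} (hp : 0 < p) (hα : 0 < α) {h : ℝ → ℝ}
    (hmeas : Measurable h) (hnn : ∀ w, 0 ≤ h w) (hint : Integrable h) :
    ∫ w : ℝ, h w * (1 - Tfun p α w)
      = ∫ y in Ioi (0:ℝ),
          (∫ w in Ioo (-(α * Real.sqrt y)) (α * Real.sqrt y), h w) * gammaPDF p y := by
  have hΓ : (0:ℝ) < Real.Gamma p := Real.Gamma_pos_of_pos hp
  have hTc : Continuous fun w : ℝ => 1 - Tfun p α w := by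
    have h1 : Continuous fun x : ℝ => x ^ 2 / α ^ 2 := by fun_prop
    exact continuous_const.sub (((lincGamma_cont hp).comp h1).div_const _)
  set ν := volume.restrict (Ioi (0:ℝ)) with hν
  set K : ℝ → ℝ → ℝ := fun w y => h w * (Ioi (w ^ 2 / α ^ 2)).indicator (gammaPDF p) y with hK
  have hu : ∀ w : ℝ, (0:ℝ) ≤ w ^ 2 / α ^ 2 := fun w => by positivity
  have hS : MeasurableSet {z : ℝ × ℝ | z.1 ^ 2 / α ^ 2 < z.2} :=
    measurableSet_lt (by fun_prop) measurable_snd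
  have hKm : Measurable (Function.uncurry K) := by
    have : Function.uncurry K =
        {z : ℝ × ℝ | z.1 ^ 2 / α ^ 2 < z.2}.indicator
          (fun z => h z.1 * gammaPDF p z.2) := by
      funext z
      simp only [Function.uncurry, hK, Set.indicator_apply, mem_Ioi, mem_setOf_eq]
      by_cases hz : z.1 ^ 2 / α ^ 2 < z.2 <;> simp [hz]
    rw [this]
    exact ((hmeas.comp measurable_fst).mul ((gammaPDF_meas p).comp measurable_snd)).indicator hS
  have hKy_int : ∀ w : ℝ, Integrable (K w) ν := fun w =>
    (((gammaPDF_integrableOn hp).indicator measurableSet_Ioi)).const_mul (h w)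
  have hKy : ∀ w : ℝ, (∫ y, K w y ∂ν) = h w * (1 - Tfun p α w) := by
    intro w
    have : (∫ y, K w y ∂ν)
        = h w * ∫ y in Ioi (0:ℝ), (Ioi (w ^ 2 / α ^ 2)).indicator (gammaPDF p) y :=
      integral_const_mul _ _
    rw [this, setIntegral_indicator measurableSet_Ioi, Ioi_inter_Ioi,
      max_eq_right (hu w), tail_eq hp (hu w)]
    rfl
  have hKnn : ∀ w y, 0 ≤ K w y := by
    intro w y
    apply mul_nonneg (hnn w)
    by_cases hy : y ∈ Ioi (w ^ 2 / α ^ 2)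
    · rw [Set.indicator_of_mem hy]
      exact gammaPDF_nonneg hp (le_trans (hu w) (le_of_lt hy))
    · rw [Set.indicator_of_notMem hy]
  have hTbd : ∀ w : ℝ, 0 ≤ 1 - Tfun p α w ∧ 1 - Tfun p α w ≤ 1 := by
    intro w
    have h1 : 0 ≤ Tfun p α w := div_nonneg (lincGamma_nonneg hp (hu w)) hΓ.le
    have h2 : Tfun p α w ≤ 1 := (div_le_one hΓ).mpr (lincGamma_le hp (hu w))
    constructor <;> [linarith; linarith]
  have hKint : Integrable (Function.uncurry K) (volume.prod ν) := by
    rw [integrable_prod_iff hKm.aestronglyMeasurable]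
    constructor
    · exact Filter.Eventually.of_forall hKy_int
    · have heq : (fun w => ∫ y, ‖K w y‖ ∂ν) = fun w => h w * (1 - Tfun p α w) := by
        funext w
        rw [← hKy w]
        congr 1
        funext y
        exact Real.norm_of_nonneg (hKnn w y)
      simp only [Function.uncurry_apply_pair]
      rw [heq]
      apply hint.mono' (hmeas.mul hTc.measurable).aestronglyMeasurable
      · exact Filter.Eventually.of_forall fun w => by
          have := hTbd w
          simp only [Pi.mul_apply]
          rw [Real.norm_of_nonneg (mul_nonneg (hnn w) this.1)]
          calc h w * (1 - Tfun p α w) ≤ h w * 1 := by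
                exact mul_le_mul_of_nonneg_left this.2 (hnn w)
            _ = h w := mul_one _
  have hswap := integral_integral_swap hKint
  have hL : (∫ w, ∫ y, K w y ∂ν) = ∫ w : ℝ, h w * (1 - Tfun p α w) := by
    congr 1; funext w; exact hKy w
  have hR : (∫ y, (∫ w, K w y) ∂ν)
      = ∫ y in Ioi (0:ℝ),
          (∫ w in Ioo (-(α * Real.sqrt y)) (α * Real.sqrt y), h w) * gammaPDF p y := by
    rw [hν]
    apply setIntegral_congr_fun measurableSet_Ioi
    intro y hy
    have hy' : (0:ℝ) < y := hy
    have hind : ∀ w : ℝ, K w y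
        = (Ioo (-(α * Real.sqrt y)) (α * Real.sqrt y)).indicator
            (fun w => h w * gammaPDF p y) w := by
      intro w
      have hiff : w ^ 2 / α ^ 2 < y ↔ w ∈ Ioo (-(α * Real.sqrt y)) (α * Real.sqrt y) :=
        mem_Ioo_iff_sq hα hy'
      simp only [hK, Set.indicator_apply, mem_Ioi]
      by_cases hc : w ^ 2 / α ^ 2 < y
      · rw [if_pos hc, if_pos (hiff.mp hc)]
      · rw [if_neg hc, if_neg (fun hm => hc (hiff.mpr hm)), mul_zero]
    calc (∫ w, K w y)
        = ∫ w in Ioo (-(α * Real.sqrt y)) (α * Real.sqrt y), h w * gammaPDF p y := by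
          rw [← integral_indicator measurableSet_Ioo]
          congr 1; funext w; exact hind w
      _ = (∫ w in Ioo (-(α * Real.sqrt y)) (α * Real.sqrt y), h w) * gammaPDF p y := by
          rw [← integral_mul_const]
  rw [← hL, hswap, hR]

/-- representation of the Tsallis-type moment `E[f^{q−1}(X;θ)] = ∫ f^q`. -/
theorem stmt9 (p μ σ α ρ δ : ℝ) (hp : 0 < p) (hσ : 0 < σ) (hα : 0 < α)
    (hρ : 0 ≤ ρ) (hδ : 0 ≤ δ) (hρδ : 0 < ρ + δ)
    (g : ℝ → ℝ) (hg0 : ∀ x, 0 ≤ g x) (hgm : Measurable g)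
    (hgi : Integrable g) (hg1 : (∫ x : ℝ, g x) = 1)
    (q : ℝ)
    (hint1 : Integrable (fun x : ℝ => tdPDF p μ σ α ρ δ g x ^ q))
    (hint2 : Integrable (fun w : ℝ => tdPDF p μ σ α ρ δ g (σ * w + μ) ^ (q - 1) * g w))
    (hint3 : IntegrableOn (fun y : ℝ =>
        ((∫ w in Iic (-α * Real.sqrt y), tdPDF p μ σ α ρ δ g (σ * w + μ) ^ (q - 1) * g w)
          - (∫ w in Iic (α * Real.sqrt y),
              tdPDF p μ σ α ρ δ g (σ * w + μ) ^ (q - 1) * g w)) * gammaPDF p y)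
        (Ioi 0)) :
    (∫ x : ℝ, tdPDF p μ σ α ρ δ g x ^ q)
      = ((ρ + δ) * σ / Znorm p σ α ρ δ g)
          * (∫ w : ℝ, tdPDF p μ σ α ρ δ g (σ * w + μ) ^ (q - 1) * g w)
        + (δ * σ / Znorm p σ α ρ δ g) *
            (∫ y in Ioi (0:ℝ),
              ((∫ w in Iic (-α * Real.sqrt y),
                  tdPDF p μ σ α ρ δ g (σ * w + μ) ^ (q - 1) * g w)
                - (∫ w in Iic (α * Real.sqrt y),
                    tdPDF p μ σ α ρ δ g (σ * w + μ) ^ (q - 1) * g w)) * gammaPDF p y) := by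
  have hΓ : (0:ℝ) < Real.Gamma p := Real.Gamma_pos_of_pos hp
  have hu : ∀ w : ℝ, (0:ℝ) ≤ w ^ 2 / α ^ 2 := fun w => by positivity
  have hT0 : ∀ w, 0 ≤ Tfun p α w := fun w => div_nonneg (lincGamma_nonneg hp (hu w)) hΓ.le
  have hT1 : ∀ w, Tfun p α w ≤ 1 := fun w => (div_le_one hΓ).mpr (lincGamma_le hp (hu w))
  -- the case q = 0 is impossible because of hint1
  by_cases hq : q = 0
  · exfalso
    rw [hq] at hint1
    simp only [Real.rpow_zero] at hint1
    rcases integrable_const_iff.mp hint1 with h1 | h1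
    · exact one_ne_zero h1
    · exact (measure_lt_top volume univ).ne Real.volume_univ
  set Z := Znorm p σ α ρ δ g with hZdef
  set F := tdPDF p μ σ α ρ δ g with hFdef
  by_cases hZ0 : Z = 0
  · have hZn : Znorm p σ α ρ δ g = 0 := by rw [← hZdef]; exact hZ0
    have hF0 : ∀ x, F x = 0 := by
      intro x
      rw [hFdef, tdPDF, hZn]
      simp
    have hL0 : (∫ x : ℝ, F x ^ q) = 0 := by
      have : (fun x : ℝ => F x ^ q) = fun _ => (0:ℝ) := by
        funext x; rw [hF0 x, Real.zero_rpow hq]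
      rw [this, integral_zero]
    rw [hL0, hZ0]
    simp [div_zero]
  -- main case : Z > 0
  have hZnn : 0 ≤ Z := by
    rw [hZdef, Znorm]
    apply mul_nonneg hσ.le
    apply integral_nonneg
    intro w
    exact mul_nonneg (add_nonneg hρ (mul_nonneg hδ (hT0 w))) (hg0 w)
  have hZpos : 0 < Z := lt_of_le_of_ne hZnn (Ne.symm hZ0)
  have hFnn : ∀ x, 0 ≤ F x := by
    intro x
    rw [hFdef, tdPDF, ← hZdef]
    exact mul_nonneg (mul_nonneg (by positivity) (add_nonneg hρ (mul_nonneg hδ (hT0 _)))) (hg0 _)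
  -- measurability
  have hTc : Continuous (Tfun p α) := by
    have h1 : Continuous fun x : ℝ => x ^ 2 / α ^ 2 := by fun_prop
    exact ((lincGamma_cont hp).comp h1).div_const _
  have hsub : Measurable fun x : ℝ => (x - μ) / σ := by fun_prop
  have hFm : Measurable F := by
    rw [hFdef]
    unfold tdPDF
    exact ((measurable_const.mul
      (measurable_const.add (measurable_const.mul (hTc.measurable.comp hsub)))).mul
      (hgm.comp hsub))
  set h : ℝ → ℝ := fun w => F (σ * w + μ) ^ (q - 1) * g w with hhdef
  have haff : Measurable fun w : ℝ => σ * w + μ := by fun_prop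
  have hhm : Measurable h := by
    rw [hhdef]
    exact (((by fun_prop : Measurable fun a : ℝ => a ^ (q - 1)).comp
      (hFm.comp haff)).mul hgm)
  have hhnn : ∀ w, 0 ≤ h w := fun w => mul_nonneg (Real.rpow_nonneg (hFnn _) _) (hg0 w)
  -- Step A : change of variables
  have hA : (∫ x : ℝ, F x ^ q) = σ * ∫ w : ℝ, F (σ * w + μ) ^ q := by
    have h1 : (∫ x : ℝ, F (σ * x + μ) ^ q) = |σ⁻¹| • ∫ y : ℝ, F (y + μ) ^ q :=
      MeasureTheory.Measure.integral_comp_mul_left (fun y => F (y + μ) ^ q) σ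
    have h2 : (∫ y : ℝ, F (y + μ) ^ q) = ∫ x : ℝ, F x ^ q :=
      integral_add_right_eq_self (fun x => F x ^ q) μ
    rw [h1, h2, abs_of_pos (inv_pos.mpr hσ), smul_eq_mul, ← mul_assoc,
      mul_inv_cancel₀ hσ.ne', one_mul]
  -- Step B : pointwise factorization
  have hB : ∀ w : ℝ, F (σ * w + μ) ^ q
      = (1 / Z) * ((ρ + δ * Tfun p α w) * h w) := by
    intro w
    have harg : (σ * w + μ - μ) / σ = w := by field_simp; ring
    have hFw : F (σ * w + μ) = (1 / Z) * (ρ + δ * Tfun p α w) * g w := by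
      rw [hFdef, tdPDF, harg, ← hZdef]
    have hsplit : F (σ * w + μ) ^ q = F (σ * w + μ) ^ (q - 1) * F (σ * w + μ) := by
      rcases eq_or_ne (F (σ * w + μ)) 0 with h0 | h0
      · rw [h0, Real.zero_rpow hq, mul_zero]
      · have := Real.rpow_add_one h0 (q - 1)
        have hq' : q - 1 + 1 = q := by ring
        rw [hq'] at this
        exact this
    rw [hsplit]
    nth_rewrite 2 [hFw]
    simp only [hhdef]
    ring
  have hC : (∫ x : ℝ, F x ^ q) = (σ / Z) * ∫ w : ℝ, (ρ + δ * Tfun p α w) * h w := by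
    rw [hA]
    have : (∫ w : ℝ, F (σ * w + μ) ^ q)
        = ∫ w : ℝ, (1 / Z) * ((ρ + δ * Tfun p α w) * h w) := by
      congr 1; funext w; exact hB w
    rw [this, integral_const_mul]; ring
  -- splitting the coefficient
  have hTc1 : Continuous fun w : ℝ => 1 - Tfun p α w := continuous_const.sub hTc
  have hint2' : Integrable (fun w : ℝ => h w * (1 - Tfun p α w)) := by
    apply hint2.mono' (hhm.mul hTc1.measurable).aestronglyMeasurable
    filter_upwards with w
    have hb1 : 0 ≤ 1 - Tfun p α w := by linarith [hT1 w]
    simp only [Pi.mul_apply]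
    rw [Real.norm_of_nonneg (mul_nonneg (hhnn w) hb1)]
    calc h w * (1 - Tfun p α w) ≤ h w * 1 := by
          apply mul_le_mul_of_nonneg_left _ (hhnn w)
          linarith [hT0 w]
      _ = h w := mul_one _
  have hD : (∫ w : ℝ, (ρ + δ * Tfun p α w) * h w)
      = (ρ + δ) * (∫ w : ℝ, h w) - δ * ∫ w : ℝ, h w * (1 - Tfun p α w) := by
    have heq : (fun w : ℝ => (ρ + δ * Tfun p α w) * h w)
        = fun w : ℝ => (ρ + δ) * h w - δ * (h w * (1 - Tfun p α w)) := by
      funext w; ring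
    rw [heq, integral_sub (hint2.const_mul _) (hint2'.const_mul _),
      integral_const_mul, integral_const_mul]
  -- Fubini
  have hE := fubini_key hp hα hhm hhnn hint2
  -- converting the inner integrals
  have hF2 : ∀ y ∈ Ioi (0:ℝ),
      (∫ w in Ioo (-(α * Real.sqrt y)) (α * Real.sqrt y), h w)
        = (∫ w in Iic (α * Real.sqrt y), h w)
          - ∫ w in Iic (-(α * Real.sqrt y)), h w := by
    intro y hy
    have ha : (0:ℝ) < α * Real.sqrt y := mul_pos hα (Real.sqrt_pos.mpr hy)
    have hle : -(α * Real.sqrt y) ≤ α * Real.sqrt y := by linarith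
    have hun := setIntegral_union (μ := volume) (f := h)
      (t := Ioc (-(α * Real.sqrt y)) (α * Real.sqrt y))
      (Iic_disjoint_Ioc (le_refl (-(α * Real.sqrt y)))) measurableSet_Ioc
      hint2.integrableOn hint2.integrableOn
    rw [Iic_union_Ioc_eq_Iic hle] at hun
    rw [← integral_Ioc_eq_integral_Ioo]
    linarith [hun]
  have hKy2 : (∫ y in Ioi (0:ℝ),
        ((∫ w in Iic (-α * Real.sqrt y), h w) - (∫ w in Iic (α * Real.sqrt y), h w))
          * gammaPDF p y)
      = - ∫ y in Ioi (0:ℝ),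
          (∫ w in Ioo (-(α * Real.sqrt y)) (α * Real.sqrt y), h w) * gammaPDF p y := by
    rw [← integral_neg]
    apply setIntegral_congr_fun measurableSet_Ioi
    intro y hy
    dsimp only
    rw [neg_mul, hF2 y hy]
    ring
  rw [hC, hD, hE, hKy2]
  field_simp
  ring
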